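/- Let U = [[A,B],[C,D]]: X ⊕ U → X^d ⊕ Y be a contraction, where A = col(A_1,...,A_d), B = col(B_1,...,B_d). Define the transfer function S(z) = D + Σ_{j=1}^d Σ_{v∈F_d} C A^v B_j z^{v·j} as a formal power series. Then the multiplication operator M_S is a contraction from H²_U(F_d) to H²_Y(F_d); i.e., S belongs to the noncommutative Schur class. -/

import Mathlib

noncomputable section
open scoped ENNReal

namespace TFAux

variable {d : ℕ} {X U Y : Type*}
  [NormedAddCommGroup X] [NormedSpace ℂ X]
  [NormedAddCommGroup U] [NormedSpace ℂ U]
  [NormedAddCommGroup Y] [NormedSpace ℂ Y]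

def tmap (A : Fin d → X →L[ℂ] X) (B : Fin d → U →L[ℂ] X) : List (Fin d) → (U →L[ℂ] X)
  | [] => 0
  | [k] => B k
  | k :: l :: v => (A k).comp (tmap A B (l :: v))

def stateX (A : Fin d → X →L[ℂ] X) (B : Fin d → U →L[ℂ] X) (f : List (Fin d) → U) :
    List (Fin d) → X
  | [] => 0
  | k :: v => A k (stateX A B f v) + B k (f v)

variable (A : Fin d → X →L[ℂ] X) (B : Fin d → U →L[ℂ] X)

lemma tmap_cons (k : Fin d) {v : List (Fin d)} (h : v ≠ []) :
    tmap A B (k :: v) = (A k).comp (tmap A B v) := by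
  cases v with
  | nil => exact absurd rfl h
  | cons l w => rfl

lemma tmap_concat (v : List (Fin d)) (j : Fin d) :
    tmap A B (v ++ [j]) = ((v.map A).prod).comp (B j) := by
  induction v with
  | nil => simp [tmap]; rfl
  | cons k w ih =>
      rw [List.cons_append, tmap_cons A B k (by simp), ih]
      simp [ContinuousLinearMap.comp_assoc, List.prod_cons]
      rfl

lemma stateX_sum (f : List (Fin d) → U) (v : List (Fin d)) :
    stateX A B f v
      = ∑ i ∈ Finset.range v.length, tmap A B (v.take (i + 1)) (f (v.drop (i + 1))) := by
  induction v with
  | nil => simp [stateX]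
  | cons k w ih =>
      rw [List.length_cons, Finset.sum_range_succ']
      simp only [List.take_succ_cons, List.drop_succ_cons, List.take_zero, List.drop_zero]
      have h1 : ∀ i ∈ Finset.range w.length,
          tmap A B (k :: w.take (i + 1)) (f (w.drop (i + 1)))
            = A k (tmap A B (w.take (i + 1)) (f (w.drop (i + 1)))) := by
        intro i hi
        rw [tmap_cons A B k (by
          simp only [ne_eq, List.take_eq_nil_iff]
          push_neg
          exact ⟨by omega, by rintro rfl; simp at hi⟩)]
        rfl
      rw [Finset.sum_congr rfl h1, ← map_sum, ← ih]
      show _ = stateX A B f (k :: w)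
      simp [stateX, tmap]

lemma g_formula (C : X →L[ℂ] Y) (D : U →L[ℂ] Y) (s : List (Fin d) → (U →L[ℂ] Y))
    (hs0 : s [] = D)
    (hsv : ∀ (v : List (Fin d)) (j : Fin d),
      s (v ++ [j]) = C.comp (((v.map A).prod).comp (B j)))
    (f : List (Fin d) → U) (v : List (Fin d)) :
    ∑ i ∈ Finset.range (v.length + 1), s (v.take i) (f (v.drop i))
      = C (stateX A B f v) + D (f v) := by
  have hsne : ∀ w : List (Fin d), w ≠ [] → s w = C.comp (tmap A B w) := by
    intro w hw
    rcases List.eq_nil_or_concat w with h | ⟨L, b, rfl⟩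
    · exact absurd h hw
    · rw [List.concat_eq_append, hsv, tmap_concat]
  rw [Finset.sum_range_succ']
  simp only [List.take_zero, List.drop_zero, hs0]
  congr 1
  have h1 : ∀ i ∈ Finset.range v.length,
      s (v.take (i + 1)) (f (v.drop (i + 1)))
        = C (tmap A B (v.take (i + 1)) (f (v.drop (i + 1)))) := by
    intro i hi
    rw [hsne _ (by
      simp only [ne_eq, List.take_eq_nil_iff]
      push_neg
      exact ⟨by omega, by rintro rfl; simp at hi⟩)]
    rfl
  rw [Finset.sum_congr rfl h1, ← map_sum, ← stateX_sum]

end TFAux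

set_option maxHeartbeats 800000 in
theorem transferFunction_schurClass {d : ℕ} {X U Y : Type*}
    [NormedAddCommGroup X] [InnerProductSpace ℂ X] [CompleteSpace X]
    [NormedAddCommGroup U] [InnerProductSpace ℂ U] [CompleteSpace U]
    [NormedAddCommGroup Y] [InnerProductSpace ℂ Y] [CompleteSpace Y]
    (A : Fin d → X →L[ℂ] X) (B : Fin d → U →L[ℂ] X) (C : X →L[ℂ] Y) (D : U →L[ℂ] Y)
    (hcontr : ∀ (x : X) (u : U),
      (∑ j : Fin d, ‖A j x + B j u‖ ^ 2) + ‖C x + D u‖ ^ 2 ≤ ‖x‖ ^ 2 + ‖u‖ ^ 2)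
    (s : List (Fin d) → (U →L[ℂ] Y))
    (hs0 : s [] = D)
    (hsv : ∀ (v : List (Fin d)) (j : Fin d),
      s (v ++ [j]) = C.comp (((v.map A).prod).comp (B j))) :
    ∀ f : lp (fun _ : List (Fin d) => U) 2,
      ∃ g : lp (fun _ : List (Fin d) => Y) 2,
        (∀ v : List (Fin d),
          g v = ∑ i ∈ Finset.range (v.length + 1), s (v.take i) (f (v.drop i))) ∧
        ‖g‖ ≤ ‖f‖ := by
  intro f
  set F : List (Fin d) → U := fun v => f v with hF
  set xs : List (Fin d) → X := TFAux.stateX A B F with hxs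
  set g0 : List (Fin d) → Y := fun v => C (xs v) + D (F v) with hg0
  -- pointwise energy inequality
  have hpt : ∀ v, (∑ j : Fin d, ‖xs (j :: v)‖ ^ 2) + ‖g0 v‖ ^ 2
      ≤ ‖xs v‖ ^ 2 + ‖F v‖ ^ 2 := by
    intro v
    have := hcontr (xs v) (F v)
    have hxc : ∀ j : Fin d, xs (j :: v) = A j (xs v) + B j (F v) := fun j => rfl
    simp only [hxc, hg0]
    exact this
  -- level sums
  set Sx : ℕ → ℝ := fun n => ∑ t : Fin n → Fin d, ‖xs (List.ofFn t)‖ ^ 2 with hSx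
  set Sf : ℕ → ℝ := fun n => ∑ t : Fin n → Fin d, ‖F (List.ofFn t)‖ ^ 2 with hSf
  set Sg : ℕ → ℝ := fun n => ∑ t : Fin n → Fin d, ‖g0 (List.ofFn t)‖ ^ 2 with hSg
  have hsucc : ∀ (h : List (Fin d) → ℝ) (n : ℕ),
      (∑ t : Fin (n+1) → Fin d, h (List.ofFn t))
        = ∑ t : Fin n → Fin d, ∑ j : Fin d, h (j :: List.ofFn t) := by
    intro h n
    rw [← Fintype.sum_equiv (Fin.consEquiv (fun _ : Fin (n+1) => Fin d))
      (fun p => h (p.1 :: List.ofFn p.2)) (fun t => h (List.ofFn t))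
      (fun p => by simp [Fin.consEquiv, List.ofFn_succ, Fin.cons_zero, Fin.cons_succ])]
    rw [Fintype.sum_prod_type, Finset.sum_comm]
  have hstep : ∀ n, Sx (n+1) + Sg n ≤ Sx n + Sf n := by
    intro n
    rw [hSx, hSg, hSf]
    simp only
    rw [hsucc (fun v => ‖xs v‖ ^ 2) n, ← Finset.sum_add_distrib]
    exact le_trans (Finset.sum_le_sum (fun t _ => hpt (List.ofFn t))) (by
      rw [Finset.sum_add_distrib])
  have htel : ∀ N, (∑ n ∈ Finset.range N, Sg n) + Sx N ≤ ∑ n ∈ Finset.range N, Sf n := by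
    intro N
    induction N with
    | zero =>
        simp only [Finset.range_zero, Finset.sum_empty, zero_add, le_refl]
        have : Sx 0 = ‖xs []‖ ^ 2 := by
          rw [hSx]; simp
        rw [this]
        have : xs ([] : List (Fin d)) = 0 := rfl
        rw [this]
        simp
    | succ N ih =>
        rw [Finset.sum_range_succ, Finset.sum_range_succ]
        have := hstep N
        linarith
  -- finsets of words of given length
  set L : ℕ → Finset (List (Fin d)) :=
    fun n => Finset.image List.ofFn (Finset.univ : Finset (Fin n → Fin d)) with hL
  have hLmem : ∀ v : List (Fin d), v ∈ L v.length := fun v =>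
    Finset.mem_image.2 ⟨v.get, Finset.mem_univ _, List.ofFn_get v⟩
  have hLlen : ∀ n (v : List (Fin d)), v ∈ L n → v.length = n := by
    intro n v hv
    rcases Finset.mem_image.1 hv with ⟨t, _, rfl⟩
    simp
  have hLsum : ∀ (h : List (Fin d) → ℝ) (n : ℕ),
      ∑ v ∈ L n, h v = ∑ t : Fin n → Fin d, h (List.ofFn t) := fun h n =>
    Finset.sum_image (fun a _ b _ hab => List.ofFn_injective hab)
  have hpd : ∀ N : ℕ, (↑(Finset.range N) : Set ℕ).PairwiseDisjoint L := by
    intro N m _ n _ hmn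
    simp only [Function.onFun]
    refine Finset.disjoint_left.2 ?_
    intro v hm hn
    exact hmn ((hLlen m v hm).symm.trans (hLlen n v hn))
  have hSxnonneg : ∀ N, 0 ≤ Sx N := by
    intro N
    exact Finset.sum_nonneg fun t _ => by positivity
  -- key finset bound
  have key : ∀ (sF : Finset (List (Fin d))), ∑ v ∈ sF, ‖g0 v‖ ^ 2 ≤ ‖f‖ ^ 2 := by
    intro sF
    set N := (sF.sup List.length) + 1 with hN
    have hsub : sF ⊆ (Finset.range N).biUnion L := by
      intro v hv
      exact Finset.mem_biUnion.2 ⟨v.length,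
        Finset.mem_range.2 (Nat.lt_succ_of_le (Finset.le_sup hv)), hLmem v⟩
    have hbj : ∀ (h : List (Fin d) → ℝ),
        ∑ v ∈ (Finset.range N).biUnion L, h v
          = ∑ n ∈ Finset.range N, ∑ t : Fin n → Fin d, h (List.ofFn t) := by
      intro h
      rw [Finset.sum_biUnion (hpd N)]
      exact Finset.sum_congr rfl fun n _ => hLsum h n
    have hfb : ∑ v ∈ (Finset.range N).biUnion L, ‖F v‖ ^ 2 ≤ ‖f‖ ^ 2 := by
      have h2 : (2 : ℝ≥0∞).toReal = ((2 : ℕ) : ℝ) := by norm_num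
      have := lp.sum_rpow_le_norm_rpow (p := 2) (by norm_num) f
        ((Finset.range N).biUnion L)
      rw [h2] at this
      simpa [Real.rpow_natCast] using this
    calc ∑ v ∈ sF, ‖g0 v‖ ^ 2
        ≤ ∑ v ∈ (Finset.range N).biUnion L, ‖g0 v‖ ^ 2 :=
          Finset.sum_le_sum_of_subset_of_nonneg hsub (fun _ _ _ => by positivity)
      _ = ∑ n ∈ Finset.range N, Sg n := by simp only [hSg]; exact hbj (fun v => ‖g0 v‖ ^ 2)
      _ ≤ ∑ n ∈ Finset.range N, Sf n :=
          le_trans (le_add_of_nonneg_right (hSxnonneg N)) (htel N)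
      _ = ∑ v ∈ (Finset.range N).biUnion L, ‖F v‖ ^ 2 := by simp only [hSf]; exact (hbj (fun v => ‖F v‖ ^ 2)).symm
      _ ≤ ‖f‖ ^ 2 := hfb
  -- membership in lp
  have hmem : Memℓp g0 2 := by
    refine memℓp_gen' (C := ‖f‖ ^ 2) ?_
    intro sF
    have h2 : (2 : ℝ≥0∞).toReal = ((2 : ℕ) : ℝ) := by norm_num
    rw [h2]
    simpa [Real.rpow_natCast] using key sF
  refine ⟨⟨g0, hmem⟩, ?_, ?_⟩
  · intro v
    exact (TFAux.g_formula A B C D s hs0 hsv F v).symm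
  · refine lp.norm_le_of_forall_sum_le (by norm_num) (norm_nonneg f) ?_
    intro sF
    have h2 : (2 : ℝ≥0∞).toReal = ((2 : ℕ) : ℝ) := by norm_num
    rw [h2]
    simpa [Real.rpow_natCast] using key sF
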